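/- With ζ(s) = 1/(η(s) − z₀) and Â(s) = ζ(s)A(s), one has the kernel identity (A(s)/A(t)) η̇(t)/(η(t) − η(s)) = (Â(s)/Â(t)) ζ̇(t)/(ζ(t) − ζ(s)) for all s ≠ t in J; consequently the generalized Neumann kernel N̂ formed with Â and ζ coincides with the generalized Neumann kernel N formed with A and η, and likewise M̂ = M. -/

import Mathlib

open Complex MeasureTheory Filter Topology

noncomputable section

/-- A real function on `ℝ` is Hölder continuous (with some positive exponent). -/
def IsHolderR (f : ℝ → ℝ) : Prop := ∃ C α : NNReal, 0 < α ∧ HolderWith C α f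

/-- Membership in the space `H` of real Hölder continuous `2π`-periodic functions
on the total parameter domain `J = J₁ ∪ ⋯ ∪ J_m`. -/
def memH {m : ℕ} (φ : Fin m → ℝ → ℝ) : Prop :=
  ∀ k, IsHolderR (φ k) ∧ Function.Periodic (φ k) (2 * Real.pi)

/-- The geometric/analytic setting: an unbounded multiply connected region `G` of
connectivity `m`, whose complement consists of `m` bounded simply connected regions
`G₁, …, G_m` with smooth boundary curves `Γ_k` parametrized by `2π`-periodic twice
continuously differentiable `η_k` (clockwise oriented, i.e. winding number `-1`
about points of `G_k`), together with a nonvanishing continuously differentiable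
coefficient function `A` on the boundary. -/
structure RHSetup (m : ℕ) where
  eta : Fin m → ℝ → ℂ
  A : Fin m → ℝ → ℂ
  Gk : Fin m → Set ℂ
  eta_per : ∀ k, Function.Periodic (eta k) (2 * Real.pi)
  eta_smooth : ∀ k, ContDiff ℝ 2 (eta k)
  eta_deriv_ne : ∀ k s, deriv (eta k) s ≠ 0
  eta_inj : ∀ k, Set.InjOn (eta k) (Set.Ico 0 (2 * Real.pi))
  Gk_open : ∀ k, IsOpen (Gk k)
  Gk_bounded : ∀ k, Bornology.IsBounded (Gk k)
  Gk_conn : ∀ k, IsConnected (Gk k)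
  Gk_simply_conn : ∀ k, SimplyConnectedSpace (Gk k)
  Gk_frontier : ∀ k, frontier (Gk k) = Set.range (eta k)
  Gk_disj : ∀ j k, j ≠ k → closure (Gk j) ∩ closure (Gk k) = ∅
  eta_orient : ∀ k, ∀ z ∈ Gk k,
    (2 * Real.pi * I)⁻¹ * ∫ t in (0:ℝ)..(2 * Real.pi),
      deriv (eta k) t / (eta k t - z) = -1
  A_smooth : ∀ k, ContDiff ℝ 1 (A k)
  A_per : ∀ k, Function.Periodic (A k) (2 * Real.pi)
  A_ne : ∀ k s, A k s ≠ 0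

namespace RHSetup
variable {m : ℕ} (S : RHSetup m)

/-- The unbounded region `G` (set of finite points; `∞ ∈ G` as well). -/
def G : Set ℂ := (⋃ k, closure (S.Gk k))ᶜ

/-- The bounded complement `G⁻ = G₁ ∪ ⋯ ∪ G_m`. -/
def Gm : Set ℂ := ⋃ k, S.Gk k

/-- The complex kernel `M(s,t) + i N(s,t) = (1/π) (A(s)/A(t)) η̇(t)/(η(t)-η(s))`,
with `s` in the parameter interval `J_k` and `t` in `J_j`. -/
def ker (k j : Fin m) (s t : ℝ) : ℂ :=
  (1 / Real.pi) * (S.A k s / S.A j t) * deriv (S.eta j) t / (S.eta j t - S.eta k s)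

/-- The Fredholm integral operator `N` with the generalized Neumann kernel. -/
def opN (φ : Fin m → ℝ → ℝ) (k : Fin m) (s : ℝ) : ℝ :=
  ∑ j, ∫ t in (0:ℝ)..(2 * Real.pi), (S.ker k j s t).im * φ j t

/-- The singular integral operator `M` (the integral is a Cauchy principal value). -/
def opM (φ : Fin m → ℝ → ℝ) (k : Fin m) (s : ℝ) : ℝ :=
  ∑ j, ∫ t in (0:ℝ)..(2 * Real.pi), (S.ker k j s t).re * φ j t

/-- The Cauchy-type integral `Φ(z) = (1/(2πi)) ∫_Γ ((γ+iμ)/A)/(η-z) dη`. -/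
def Phi (γ μ : Fin m → ℝ → ℝ) (z : ℂ) : ℂ :=
  (2 * Real.pi * I)⁻¹ * ∑ j, ∫ t in (0:ℝ)..(2 * Real.pi),
    (((γ j t : ℂ) + I * (μ j t : ℂ)) / S.A j t) * deriv (S.eta j) t / (S.eta j t - z)

/-- `fb` is the boundary value function of `f` from inside `G` (left of `Γ`). -/
def BVplus (f : ℂ → ℂ) (fb : Fin m → ℝ → ℂ) : Prop :=
  ∀ k s, Tendsto f (nhdsWithin (S.eta k s) S.G) (nhds (fb k s))

/-- `gb` is the boundary value function of `g` from `G⁻` (right of `Γ`). -/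
def BVminus (g : ℂ → ℂ) (gb : Fin m → ℝ → ℂ) : Prop :=
  ∀ k s, Tendsto g (nhdsWithin (S.eta k s) (S.Gk k)) (nhds (gb k s))

/-- `f` is analytic in the unbounded region `G` with `f(∞) = 0`. -/
def AnlG (f : ℂ → ℂ) : Prop :=
  DifferentiableOn ℂ f S.G ∧ Tendsto f (cocompact ℂ) (nhds 0)

/-- `φ ∈ S⁺`: `φ = A f⁺` (real) for some `f` analytic in `G`, `f(∞)=0`. -/
def memSplus (φ : Fin m → ℝ → ℝ) : Prop :=
  ∃ f fb, S.AnlG f ∧ S.BVplus f fb ∧ ∀ k s, S.A k s * fb k s = (φ k s : ℂ)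

/-- `φ ∈ S⁻`: `φ = A g⁻` (real) for some `g` analytic in `G⁻`. -/
def memSminus (φ : Fin m → ℝ → ℝ) : Prop :=
  ∃ g gb, DifferentiableOn ℂ g S.Gm ∧ S.BVminus g gb ∧
    ∀ k s, S.A k s * gb k s = (φ k s : ℂ)

/-- `γ ∈ R⁺`: `γ = Re[A f⁺]` for some `f` analytic in `G`, `f(∞)=0`. -/
def memRplus (γ : Fin m → ℝ → ℝ) : Prop :=
  ∃ f fb, S.AnlG f ∧ S.BVplus f fb ∧ ∀ k s, (S.A k s * fb k s).re = γ k s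

/-- `γ ∈ R⁻`: `γ = Re[A g⁻]` for some `g` analytic in `G⁻`. -/
def memRminus (γ : Fin m → ℝ → ℝ) : Prop :=
  ∃ g gb, DifferentiableOn ℂ g S.Gm ∧ S.BVminus g gb ∧
    ∀ k s, (S.A k s * gb k s).re = γ k s

/-- `κ j` is the winding number (index) of `A` on the curve `Γ_j`:
`∮_{Γ_j} A'/A = 2πi κ_j`. -/
def IsIndex (κ : Fin m → ℤ) : Prop :=
  ∀ k, (2 * Real.pi * I) * (κ k : ℂ) =
    ∫ t in (0:ℝ)..(2 * Real.pi), deriv (S.A k) t / S.A k t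

end RHSetup

/-- `ζ(s) = 1/(η(s) - z₀)`, the parametrization of the Möbius image of `Γ`. -/
def zetaP {m : ℕ} (S : RHSetup m) (z₀ : ℂ) (j : Fin m) (t : ℝ) : ℂ :=
  (S.eta j t - z₀)⁻¹

/-- `Â(s) = ζ(s)A(s)`. -/
def Ahat {m : ℕ} (S : RHSetup m) (z₀ : ℂ) (j : Fin m) (t : ℝ) : ℂ :=
  zetaP S z₀ j t * S.A j t

/-- The complex kernel `M̂(s,t) + i N̂(s,t)` formed with `Â` and `ζ`. -/
def kerHat {m : ℕ} (S : RHSetup m) (z₀ : ℂ) (k j : Fin m) (s t : ℝ) : ℂ :=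
  (1 / Real.pi) * (Ahat S z₀ k s / Ahat S z₀ j t) * deriv (zetaP S z₀ j) t /
    (zetaP S z₀ j t - zetaP S z₀ k s)

/-- With `ζ(s) = 1/(η(s) - z₀)` and `Â(s) = ζ(s)A(s)` one has
the kernel identity
`(A(s)/A(t)) η̇(t)/(η(t)-η(s)) = (Â(s)/Â(t)) ζ̇(t)/(ζ(t)-ζ(s))` whenever
`η(t) ≠ η(s)`; consequently the generalized Neumann kernel `N̂` formed with
`Â, ζ` coincides with the kernel `N` formed with `A, η`, and likewise `M̂ = M`. -/
theorem kernel_invariance_under_moebius {m : ℕ} (S : RHSetup m)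
    (z₀ : ℂ) (hz₀ : ∀ k s, S.eta k s ≠ z₀) :
    ∀ k j s t, S.eta j t ≠ S.eta k s →
      (S.A k s / S.A j t * deriv (S.eta j) t / (S.eta j t - S.eta k s) =
        Ahat S z₀ k s / Ahat S z₀ j t * deriv (zetaP S z₀ j) t /
          (zetaP S z₀ j t - zetaP S z₀ k s)) ∧
      (S.ker k j s t).im = (kerHat S z₀ k j s t).im ∧
      (S.ker k j s t).re = (kerHat S z₀ k j s t).re := by
  intro k j s t hne
  have hzt : S.eta j t - z₀ ≠ 0 := sub_ne_zero.mpr (hz₀ j t)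
  have hzs : S.eta k s - z₀ ≠ 0 := sub_ne_zero.mpr (hz₀ k s)
  have hd : HasDerivAt (S.eta j) (deriv (S.eta j) t) t :=
    (((S.eta_smooth j).differentiable (by norm_num)) t).hasDerivAt
  have hdz : deriv (zetaP S z₀ j) t =
      -((S.eta j t - z₀) ^ 2)⁻¹ * deriv (S.eta j) t := by
    have h2 := (hasDerivAt_inv hzt).comp t (hd.sub_const z₀)
    have : deriv (Inv.inv ∘ fun x => S.eta j x - z₀) t =
        -((S.eta j t - z₀) ^ 2)⁻¹ * deriv (S.eta j) t := h2.deriv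
    exact this
  have hηne' : S.eta k s - S.eta j t ≠ 0 :=
    sub_ne_zero.mpr fun h => hne h.symm
  have hζne : zetaP S z₀ j t - zetaP S z₀ k s ≠ 0 := by
    simp only [zetaP]
    rw [inv_sub_inv hzt hzs]
    apply div_ne_zero
    · intro h
      apply hne
      have := sub_eq_zero.mp h
      linear_combination -this
    · exact mul_ne_zero hzt hzs
  have hAne : S.A j t ≠ 0 := S.A_ne j t
  have hAne' : S.A k s ≠ 0 := S.A_ne k s
  have hηne : S.eta j t - S.eta k s ≠ 0 := sub_ne_zero.mpr hne
  have hmain : S.A k s / S.A j t * deriv (S.eta j) t / (S.eta j t - S.eta k s) =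
      Ahat S z₀ k s / Ahat S z₀ j t * deriv (zetaP S z₀ j) t /
        (zetaP S z₀ j t - zetaP S z₀ k s) := by
    simp only [Ahat, zetaP]
    rw [hdz, inv_sub_inv hzt hzs]
    field_simp
    rw [show S.eta k s - z₀ - (S.eta j t - z₀) = -(S.eta j t - S.eta k s) by ring,
      div_neg, neg_neg, mul_div_assoc, div_self hηne, mul_one]
  refine ⟨hmain, ?_, ?_⟩ <;>
  · have hk : S.ker k j s t = kerHat S z₀ k j s t := by
      simp only [RHSetup.ker, kerHat, mul_assoc, mul_div_assoc]
      rw [mul_div_assoc] at hmain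
      rw [hmain]; ring
    rw [hk]
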